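/- Let B be a complex p×p matrix with det(B) = 0 such that 0 is a simple eigenvalue of B. Let l be a row vector and r a column vector with lB = 0, Br = 0, and l·r = 1, and let β be the product of the p−1 nonzero eigenvalues of B (counted with multiplicity). Then the Fréchet derivative of the determinant at B, applied to an arbitrary matrix X, equals β·(l X r). -/

import Mathlib

open Matrix Polynomial Module

noncomputable def detCLM (p : ℕ) :
    ContinuousMultilinearMap ℂ (fun _ : Fin p => (Fin p → ℂ)) ℂ where
  toMultilinearMap := (Matrix.detRowAlternating : (Fin p → ℂ) [⋀^Fin p]→ₗ[ℂ] ℂ).toMultilinearMap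
  cont := show Continuous fun M : Matrix (Fin p) (Fin p) ℂ => M.det from continuous_id.matrix_det

lemma hasDerivAt_det_aux {p : ℕ} (B X : Matrix (Fin p) (Fin p) ℂ) :
    HasDerivAt (fun ε : ℂ => (B + ε • X).det)
      (∑ i, (B.updateRow i (X i)).det) 0 := by
  have hg : ∀ i : Fin p, HasFDerivAt (fun ε : ℂ => B i + ε • X i)
      ((1 : ℂ →L[ℂ] ℂ).smulRight (X i)) 0 := by
    intro i
    exact (show HasDerivAt (fun ε : ℂ => B i + ε • X i) (X i) 0 by
      simpa using ((hasDerivAt_id (0:ℂ)).smul_const (X i)).const_add (B i)).hasFDerivAt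
  have H := HasFDerivAt.multilinear_comp (f := detCLM p)
      (g := fun i (ε : ℂ) => B i + ε • X i)
      (g' := fun i => (1 : ℂ →L[ℂ] ℂ).smulRight (X i)) (x := (0:ℂ)) hg
  have H2 := H.hasDerivAt
  simp only [ContinuousLinearMap.sum_apply, ContinuousLinearMap.comp_apply,
    ContinuousLinearMap.smulRight_apply, ContinuousLinearMap.one_apply, one_smul,
    zero_smul, add_zero] at H2
  convert H2 using 2 <;> rfl

lemma det_updateRow_eq {p : ℕ} (B : Matrix (Fin p) (Fin p) ℂ) (i : Fin p) (b : Fin p → ℂ) :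
    (B.updateRow i b).det = ∑ j, b j * adjugate B j i := by
  have hb : b = ∑ j, b j • (Pi.single j (1:ℂ) : Fin p → ℂ) := by
    funext k
    simp [Pi.single_apply, Finset.sum_ite_eq', mul_comm]
  rw [← cramer_transpose_apply]
  conv_lhs => rw [hb]
  rw [map_sum]
  simp only [LinearMap.map_smul, Finset.sum_apply, Pi.smul_apply, smul_eq_mul,
    cramer_transpose_apply, ← adjugate_apply]

lemma ker_le_span {p : ℕ} (B : Matrix (Fin p) (Fin p) ℂ)
    (hsimple : Polynomial.rootMultiplicity (0 : ℂ) B.charpoly = 1)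
    (r : Fin p → ℂ) (hr : B.mulVec r = 0) (hr0 : r ≠ 0) :
    ∀ v : Fin p → ℂ, B.mulVec v = 0 → ∃ c : ℂ, v = c • r := by
  set φ : Module.End ℂ (Fin p → ℂ) := Matrix.toLin' B with hφ
  have hφch : φ.charpoly = B.charpoly := by
    rw [← LinearMap.charpoly_toMatrix φ (Pi.basisFun ℂ (Fin p)),
      LinearMap.toMatrix_eq_toMatrix', LinearMap.toMatrix'_toLin']
  have hmax : finrank ℂ (φ.maxGenEigenspace 0) = 1 := by
    rw [LinearMap.finrank_maxGenEigenspace_zero_eq, hφch,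
      ← Polynomial.rootMultiplicity_eq_natTrailingDegree', hsimple]
  have hker : LinearMap.ker φ ≤ φ.maxGenEigenspace 0 := by
    intro x hx
    rw [Module.End.mem_maxGenEigenspace]
    refine ⟨1, by simpa using hx⟩
  have hrker : r ∈ LinearMap.ker φ := by
    simp only [LinearMap.mem_ker, hφ, Matrix.toLin'_apply]
    exact hr
  have hspan : Submodule.span ℂ {r} ≤ LinearMap.ker φ :=
    (Submodule.span_singleton_le_iff_mem _ _).2 hrker
  have hle : finrank ℂ (LinearMap.ker φ) ≤ 1 := hmax ▸ Submodule.finrank_mono hker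
  have h1 : finrank ℂ (Submodule.span ℂ ({r} : Set (Fin p → ℂ))) = 1 :=
    finrank_span_singleton hr0
  have heq : Submodule.span ℂ ({r} : Set (Fin p → ℂ)) = LinearMap.ker φ :=
    Submodule.eq_of_le_of_finrank_le hspan (h1 ▸ hle)
  intro v hv
  have hvker : v ∈ LinearMap.ker φ := by
    simp only [LinearMap.mem_ker, hφ, Matrix.toLin'_apply]
    exact hv
  rw [← heq, Submodule.mem_span_singleton] at hvker
  obtain ⟨c, hc⟩ := hvker
  exact ⟨c, hc.symm⟩

lemma charpoly_transpose' {p : ℕ} (B : Matrix (Fin p) (Fin p) ℂ) :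
    Bᵀ.charpoly = B.charpoly := by
  rw [Matrix.charpoly, Matrix.charpoly, ← Matrix.det_transpose (charmatrix B)]
  congr 1
  ext i j
  by_cases h : i = j
  · subst h; simp [charmatrix_apply_eq]
  · simp [charmatrix_apply_ne _ _ _ h, charmatrix_apply_ne _ _ _ (Ne.symm h),
      transpose_apply]

lemma hasDerivAt_det_one {p : ℕ} (B : Matrix (Fin p) (Fin p) ℂ)
    (hsimple : Polynomial.rootMultiplicity (0 : ℂ) B.charpoly = 1)
    (β : ℂ) (hβ : β = (B.charpoly.roots.filter (fun z => z ≠ 0)).prod) :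
    HasDerivAt (fun ε : ℂ => (B + ε • (1 : Matrix (Fin p) (Fin p) ℂ)).det) β 0 := by
  have hmonic := B.charpoly_monic
  have hsp : B.charpoly.Splits := IsAlgClosed.splits _
  set S := B.charpoly.roots.filter (fun z => z ≠ 0) with hS
  have h0 : B.charpoly.roots.count 0 = 1 := by
    rw [Polynomial.count_roots]; exact hsimple
  have hroots : B.charpoly.roots = 0 ::ₘ S := by
    have h1 := Multiset.filter_add_not (fun z => z ≠ 0) B.charpoly.roots
    have h2 : B.charpoly.roots.filter (fun z => ¬ z ≠ 0)
        = Multiset.replicate 1 (0:ℂ) := by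
      rw [← h0, ← Multiset.filter_eq']
      exact Multiset.filter_congr (fun x _ => by simp)
    calc B.charpoly.roots = S + B.charpoly.roots.filter (fun z => ¬ z ≠ 0) := h1.symm
    _ = 0 ::ₘ S := by rw [h2]; simp [add_comm]
  have hcard : Multiset.card S + 1 = p := by
    have hc : Multiset.card B.charpoly.roots = p := by
      rw [splits_iff_card_roots.1 hsp, Matrix.charpoly_natDegree_eq_dim, Fintype.card_fin]
    rw [hroots, Multiset.card_cons] at hc
    omega
  have hderiv : B.charpoly.derivative.eval 0 = (-1:ℂ) ^ (Multiset.card S) * β := by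
    have := hsp.eq_prod_roots_of_monic hmonic
    rw [hroots] at this
    nth_rewrite 1 [this]
    rw [Multiset.map_cons, Multiset.prod_cons]
    simp only [map_zero, sub_zero]
    rw [derivative_mul, derivative_X, one_mul, eval_add, eval_mul, eval_X, zero_mul, add_zero]
    rw [eval_multiset_prod, Multiset.map_map]
    have hmm : (S.map (eval 0 ∘ fun a => X - C a)) = S.map Neg.neg := by
      apply Multiset.map_congr rfl
      intro x _; simp
    rw [hmm, Multiset.prod_map_neg, hβ]
  have hpt : ∀ ε : ℂ, (B + ε • (1 : Matrix (Fin p) (Fin p) ℂ)).det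
      = (-1:ℂ)^p * B.charpoly.eval (-ε) := by
    intro ε
    have h1 : B.charpoly.eval (-ε)
        = ((Polynomial.evalRingHom (-ε)).mapMatrix (charmatrix B)).det := by
      rw [Matrix.charpoly, ← RingHom.map_det]; rfl
    have h2 : (Polynomial.evalRingHom (-ε)).mapMatrix (charmatrix B)
        = -(B + ε • (1 : Matrix (Fin p) (Fin p) ℂ)) := by
      ext i j
      by_cases h : i = j
      · subst h
        simp [charmatrix_apply_eq, Matrix.one_apply]
        ring
      · simp [charmatrix_apply_ne _ _ _ h, Matrix.one_apply_ne h]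
    have hsq : ((-1:ℂ)^p) * ((-1:ℂ)^p) = 1 := by
      rw [← pow_add, ← two_mul, pow_mul]; norm_num
    rw [h1, h2, Matrix.det_neg, Fintype.card_fin, ← mul_assoc, hsq, one_mul]
  have hD : HasDerivAt (fun ε : ℂ => (-1:ℂ)^p * B.charpoly.eval (-ε))
      ((-1:ℂ)^p * (B.charpoly.derivative.eval (-(0:ℂ)) * (-1))) 0 := by
    have hneg : HasDerivAt (fun ε : ℂ => -ε) (-1) (0:ℂ) := (hasDerivAt_id (0:ℂ)).neg
    have := ((B.charpoly.hasDerivAt (-(0:ℂ))).comp (0:ℂ) hneg).const_mul ((-1:ℂ)^p)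
    simpa [Function.comp] using this
  have hsqS : ((-1:ℂ)^(Multiset.card S)) * ((-1:ℂ)^(Multiset.card S)) = 1 := by
    rw [← pow_add, ← two_mul, pow_mul]; norm_num
  have hp : ((-1:ℂ))^p = (-1:ℂ)^(Multiset.card S) * (-1) := by
    rw [← hcard, pow_succ]
  have hval : ((-1:ℂ)^p) * (B.charpoly.derivative.eval (-(0:ℂ)) * (-1)) = β := by
    rw [neg_zero, hderiv]
    calc ((-1:ℂ)^p) * ((-1:ℂ)^(Multiset.card S) * β * (-1))
        = (((-1:ℂ)^(Multiset.card S)) * ((-1:ℂ)^(Multiset.card S))) * (((-1:ℂ))*((-1:ℂ))) * β := by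
          rw [hp]; ring
      _ = β := by rw [hsqS]; ring
  have hfun : (fun ε : ℂ => (B + ε • (1 : Matrix (Fin p) (Fin p) ℂ)).det)
      = (fun ε : ℂ => (-1:ℂ)^p * B.charpoly.eval (-ε)) := funext hpt
  rw [hfun]
  exact hval ▸ hD

theorem frechet_derivative_det_singular
    {p : ℕ} (B : Matrix (Fin p) (Fin p) ℂ)
    (hdet : B.det = 0)
    (hsimple : Polynomial.rootMultiplicity (0 : ℂ) B.charpoly = 1)
    (l r : Fin p → ℂ)
    (hl : Matrix.vecMul l B = 0) (hr : B.mulVec r = 0)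
    (hlr : l ⬝ᵥ r = 1)
    (β : ℂ) (hβ : β = (B.charpoly.roots.filter (fun z => z ≠ 0)).prod)
    (X : Matrix (Fin p) (Fin p) ℂ) :
    HasDerivAt (fun ε : ℂ => (B + ε • X).det) (β * (l ⬝ᵥ X.mulVec r)) 0 := by
  have hr0 : r ≠ 0 := by
    intro h
    rw [h] at hlr
    simp [dotProduct] at hlr
  have hl0 : l ≠ 0 := by
    intro h
    rw [h] at hlr
    simp [dotProduct] at hlr
  have hchT : Bᵀ.charpoly = B.charpoly := charpoly_transpose' B
  have Kr := ker_le_span B hsimple r hr hr0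
  have Kl := ker_le_span Bᵀ (by rw [hchT]; exact hsimple) l
      (by rw [Matrix.mulVec_transpose]; exact hl) hl0
  have hBadj : B * adjugate B = 0 := by rw [mul_adjugate, hdet, zero_smul]
  have hadjB : adjugate B * B = 0 := by rw [adjugate_mul, hdet, zero_smul]
  have hcol : ∀ j, ∃ c : ℂ, (fun i => adjugate B i j) = c • r := by
    intro j
    apply Kr
    funext i
    have h := congrFun (congrFun hBadj i) j
    simpa [Matrix.mulVec, Matrix.mul_apply, dotProduct] using h
  choose c hc using hcol
  have hrow : ∀ i, ∃ d : ℂ, (fun j => adjugate B i j) = d • l := by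
    intro i
    apply Kl
    funext j
    have h := congrFun (congrFun hadjB i) j
    simpa [Matrix.mulVec, Matrix.mul_apply, dotProduct, transpose_apply, mul_comm] using h
  choose d hd using hrow
  obtain ⟨i0, hi0⟩ : ∃ i, r i ≠ 0 := by
    by_contra h
    push_neg at h
    exact hr0 (funext fun i => h i)
  set γ : ℂ := d i0 / r i0 with hγ
  have hadj : ∀ i j, adjugate B i j = γ * r i * l j := by
    intro i j
    have h1 : adjugate B i j = c j * r i := by simpa using congrFun (hc j) i
    have h2 : adjugate B i0 j = d i0 * l j := by simpa using congrFun (hd i0) j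
    have h3 : adjugate B i0 j = c j * r i0 := by simpa using congrFun (hc j) i0
    have h4 : c j * r i0 = d i0 * l j := h3.symm.trans h2
    have hcj : c j = γ * l j := by
      rw [hγ, div_mul_eq_mul_div, eq_div_iff hi0]
      linear_combination h4
    rw [h1, hcj]
    ring
  -- γ = β via derivative in direction 1
  have haux1 := hasDerivAt_det_aux B 1
  have hsum1 : (∑ i, (B.updateRow i ((1 : Matrix (Fin p) (Fin p) ℂ) i)).det) = γ := by
    simp only [det_updateRow_eq]
    have hterm : ∀ i : Fin p, ∑ j, (1 : Matrix (Fin p) (Fin p) ℂ) i j * adjugate B j i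
        = γ * (l i * r i) := by
      intro i
      rw [Finset.sum_eq_single i]
      · rw [hadj, Matrix.one_apply_eq]; ring
      · intro j _ hj
        rw [Matrix.one_apply_ne (Ne.symm hj), zero_mul]
      · intro h
        exact absurd (Finset.mem_univ i) h
    rw [Finset.sum_congr rfl (fun i _ => hterm i), ← Finset.mul_sum]
    have : ∑ i, l i * r i = 1 := hlr
    rw [this, mul_one]
  rw [hsum1] at haux1
  have hone := hasDerivAt_det_one B hsimple β hβ
  have hγβ : γ = β := haux1.unique hone
  -- final
  have hX := hasDerivAt_det_aux B X
  have hfin : (∑ i, (B.updateRow i (X i)).det) = β * (l ⬝ᵥ X.mulVec r) := by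
    simp only [det_updateRow_eq, hadj, dotProduct, Matrix.mulVec, Finset.mul_sum, ← hγβ]
    apply Finset.sum_congr rfl
    intro i _
    apply Finset.sum_congr rfl
    intro j _
    ring
  rwa [hfin] at hX
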